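/- Let $X \in L^2$ be centred with variance $\sigma^2$, $p \in (0,1)$, and let $(S_n)$ and $(\hat{S}_n)$ be the random walk and its positively step-reinforced version built from the same steps and reinforcement randomness. Then for every $k \geq 2$, $\mathbb{E}(\Delta\hat{M}_k \cdot X_k \mid \mathcal{F}_{k-1}) = \hat{a}_k (1-p)\sigma^2$, where $\hat{M}_k = \hat{a}_k\hat{S}_k$ and $\Delta\hat{M}_k = \hat{M}_k - \hat{M}_{k-1}$. -/

import Mathlib

open MeasureTheory ProbabilityTheory Filter Finset

/-- `âₙ = ∏_{k=1}^{n-1} k/(k+p) = Γ(n)/Γ(n+p)` (normalised so that `â₁ = 1`). -/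
noncomputable def hata (p : ℝ) (n : ℕ) : ℝ :=
  ∏ k ∈ Finset.Ico 1 n, (k : ℝ) / ((k : ℝ) + p)

private lemma l2_mul_int {Ω : Type*} {mΩ : MeasurableSpace Ω} {P : Measure Ω}
    {f g : Ω → ℝ} (hf : MemLp f 2 P) (hg : MemLp g 2 P) :
    Integrable (fun ω => f ω * g ω) P := by
  have h : MemLp (f • g) 1 P := haveI : ENNReal.HolderTriple 2 2 1 := ⟨by norm_num [ENNReal.inv_two_add_inv_two]⟩; hg.smul hf
  rw [memLp_one_iff_integrable] at h
  exact h

/-- for the random walk and its positively step-reinforced version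
built from the same steps and reinforcement randomness, for every `k ≥ 2`,
`E(ΔM̂ₖ · Xₖ | ℱ_{k-1}) = âₖ (1-p) σ²`, where `M̂ₖ = âₖ Ŝₖ`. -/
theorem reinforced_predictable_covariation_with_walk
    {Ω : Type*} {mΩ : MeasurableSpace Ω} (P : Measure Ω) [IsProbabilityMeasure P]
    (ℱ : Filtration ℕ mΩ)
    (p σ : ℝ) (hp : p ∈ Set.Ioo (0 : ℝ) 1)
    (X hatX : ℕ → Ω → ℝ) (ε : ℕ → Ω → Bool) (U : ℕ → Ω → ℕ)
    (hXL2 : ∀ k, MemLp (X k) 2 P) (hhatL2 : ∀ k, MemLp (hatX k) 2 P)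
    (hXmeas : ∀ k, Measurable (X k)) (hεmeas : ∀ k, Measurable (ε k))
    (hUmeas : ∀ k, Measurable (U k))
    (hadapt : Adapted ℱ hatX)
    -- `X̂ₖ = Xₖ 1_{εₖ=0} + X̂_{U[k-1]} 1_{εₖ=1}`, with `U[k-1]` uniform on `{1,…,k-1}`
    (hdef : ∀ k : ℕ, 2 ≤ k → ∀ ω, hatX k ω =
      if ε k ω = true then hatX (U (k - 1) ω) ω else X k ω)
    (hUrange : ∀ k : ℕ, 2 ≤ k → ∀ ω, U (k - 1) ω ∈ Finset.Icc 1 (k - 1))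
    -- `(εₖ, U[k-1], Xₖ)` is independent of `ℱ_{k-1}`
    (hindep : ∀ k : ℕ, 2 ≤ k → Indep
      (MeasurableSpace.comap (fun ω => (ε k ω, U (k - 1) ω, X k ω)) inferInstance)
      (ℱ (k - 1)) P)
    -- `(εₖ, U[k-1])` is independent of `Xₖ`
    (hindep' : ∀ k : ℕ, 2 ≤ k →
      IndepFun (fun ω => (ε k ω, U (k - 1) ω)) (X k) P)
    -- `εₖ` is Bernoulli(`p`), `U[k-1]` uniform, mutually independent
    (hlaw : ∀ k : ℕ, 2 ≤ k → ∀ j ∈ Finset.Icc 1 (k - 1),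
      P {ω | ε k ω = true ∧ U (k - 1) ω = j} = ENNReal.ofReal (p / (k - 1 : ℕ)))
    (hlaw' : ∀ k : ℕ, 2 ≤ k → P {ω | ε k ω = false} = ENNReal.ofReal (1 - p))
    -- the steps are centred with variance `σ²`
    (hXcent : ∀ k, ∫ ω, X k ω ∂P = 0)
    (hXvar : ∀ k, ∫ ω, (X k ω) ^ 2 ∂P = σ ^ 2) :
    ∀ k : ℕ, 2 ≤ k →
      P[fun ω =>
          (hata p k * ∑ j ∈ Finset.Icc 1 k, hatX j ω
            - hata p (k - 1) * ∑ j ∈ Finset.Icc 1 (k - 1), hatX j ω) * X k ω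
        | ℱ (k - 1)]
        =ᵐ[P] fun _ => hata p k * (1 - p) * σ ^ 2 := by
  intro k hk
  obtain ⟨n, rfl⟩ : ∃ n, k = n + 2 := ⟨k - 2, by omega⟩
  clear hk
  have hred : n + 2 - 1 = n + 1 := rfl
  simp only [hred]
  -- notation
  set a2 : ℝ := hata p (n + 2) with ha2
  set a1 : ℝ := hata p (n + 1) with ha1
  -- the triple
  set T : Ω → Bool × ℕ × ℝ := fun ω => (ε (n + 2) ω, U (n + 1) ω, X (n + 2) ω) with hT
  have hTmeas : Measurable T :=
    ((hεmeas _).prodMk ((hUmeas _).prodMk (hXmeas _)))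
  have hTm1 : Measurable[MeasurableSpace.comap T inferInstance] T :=
    Measurable.of_comap_le le_rfl
  have hle : ℱ (n + 1) ≤ mΩ := ℱ.le _
  have hind : Indep (MeasurableSpace.comap T inferInstance) (ℱ (n + 1)) P :=
    hindep (n + 2) (by omega)
  have hdef' : ∀ ω, hatX (n + 2) ω =
      if ε (n + 2) ω = true then hatX (U (n + 1) ω) ω else X (n + 2) ω :=
    hdef (n + 2) (by omega)
  have hUrange' : ∀ ω, U (n + 1) ω ∈ Finset.Icc 1 (n + 1) := hUrange (n + 2) (by omega)
  have hindep'' : IndepFun (fun ω => (ε (n + 2) ω, U (n + 1) ω)) (X (n + 2)) P :=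
    hindep' (n + 2) (by omega)
  -- the key pull-out computation
  have key : ∀ (G h : Ω → ℝ) (c : ℝ), StronglyMeasurable[ℱ (n + 1)] G →
      (∃ F : Bool × ℕ × ℝ → ℝ, Measurable F ∧ h = fun ω => F (T ω)) →
      Integrable (fun ω => G ω * h ω) P → Integrable h P →
      (∫ x, h x ∂P) = c →
      P[fun ω => G ω * h ω | ℱ (n + 1)] =ᵐ[P] fun ω => G ω * c := by
    rintro G h c hGm ⟨F, hF, rfl⟩ hGh hh hc
    have h1 : P[fun ω => G ω * F (T ω) | ℱ (n + 1)]
        =ᵐ[P] G * P[fun ω => F (T ω) | ℱ (n + 1)] :=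
      condExp_mul_of_stronglyMeasurable_left hGm hGh hh
    have h2 : P[fun ω => F (T ω) | ℱ (n + 1)] =ᵐ[P] fun _ => c := by
      refine (condExp_indep_eq hTmeas.comap_le hle
        ((hF.comp hTm1).stronglyMeasurable) hind).trans ?_
      exact Eventually.of_forall fun _ => hc
    filter_upwards [h1, h2] with ω h1ω h2ω
    rw [h1ω, Pi.mul_apply, h2ω]
  -- the pieces
  have hhj2 : ∀ j : ℕ, MemLp
      (fun ω => if ε (n + 2) ω = true ∧ U (n + 1) ω = j then X (n + 2) ω else 0) 2 P := by
    intro j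
    refine MemLp.of_le (hXL2 (n + 2)) ?_ (Eventually.of_forall fun ω => ?_)
    · exact (Measurable.ite
        (((hεmeas (n + 2)) (measurableSet_singleton true)).inter
          ((hUmeas (n + 1)) (measurableSet_singleton j)))
        (hXmeas (n + 2)) measurable_const).aestronglyMeasurable
    · by_cases h : ε (n + 2) ω = true ∧ U (n + 1) ω = j <;> simp [h, norm_nonneg]
  have hmono : ∀ j ∈ Finset.Icc 1 (n + 1), StronglyMeasurable[ℱ (n + 1)] (hatX j) :=
    fun j hj => ((hadapt j).mono (ℱ.mono (Finset.mem_Icc.mp hj).2) le_rfl).stronglyMeasurable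
  have hint1 : ∀ j ∈ Finset.Icc 1 (n + 1), Integrable
      (fun ω => (a2 * hatX j ω) *
        (if ε (n + 2) ω = true ∧ U (n + 1) ω = j then X (n + 2) ω else 0)) P :=
    fun j _ => l2_mul_int ((hhatL2 j).const_mul a2) (hhj2 j)
  have hf₁int : Integrable (∑ j ∈ Finset.Icc 1 (n + 1),
      fun ω => (a2 * hatX j ω) *
        (if ε (n + 2) ω = true ∧ U (n + 1) ω = j then X (n + 2) ω else 0)) P :=
    integrable_finset_sum' _ hint1
  have hhbint : Integrable
      (fun ω => if ε (n + 2) ω = false then X (n + 2) ω ^ 2 else 0) P := by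
    have heq : (fun ω => if ε (n + 2) ω = false then X (n + 2) ω ^ 2 else 0)
        = fun ω => (if ε (n + 2) ω = false then (1 : ℝ) else 0) * X (n + 2) ω ^ 2 := by
      funext ω; by_cases h : ε (n + 2) ω = false <;> simp [h]
    rw [heq]
    refine Integrable.bdd_mul ((hXL2 (n + 2)).integrable_sq) (c := 1) ?_ (Eventually.of_forall fun ω => ?_)
    · exact (Measurable.ite ((hεmeas (n + 2)) (measurableSet_singleton false))
        measurable_const measurable_const).aestronglyMeasurable
    · by_cases h : ε (n + 2) ω = false <;> simp [h]
  have hf₂int : Integrable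
      (fun ω => a2 * (if ε (n + 2) ω = false then X (n + 2) ω ^ 2 else 0)) P :=
    hhbint.const_mul a2
  have hS2 : MemLp (fun ω => ∑ j ∈ Finset.Icc 1 (n + 1), hatX j ω) 2 P := by
    have h := memLp_finset_sum' (Finset.Icc 1 (n + 1)) (fun j _ => hhatL2 j) (μ := P) (p := 2)
    have heq : (∑ j ∈ Finset.Icc 1 (n + 1), hatX j)
        = fun ω => ∑ j ∈ Finset.Icc 1 (n + 1), hatX j ω := by
      funext ω; simp
    rwa [heq] at h
  have hf₃int : Integrable
      (fun ω => ((a2 - a1) * ∑ j ∈ Finset.Icc 1 (n + 1), hatX j ω) * X (n + 2) ω) P :=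
    l2_mul_int (hS2.const_mul (a2 - a1)) (hXL2 (n + 2))
  -- integrals of the independent parts
  have hIj : ∀ j : ℕ,
      (∫ x, (if ε (n + 2) x = true ∧ U (n + 1) x = j then X (n + 2) x else 0) ∂P) = 0 := by
    intro j
    have heq : (fun x => if ε (n + 2) x = true ∧ U (n + 1) x = j then X (n + 2) x else 0)
        = (fun x => if ε (n + 2) x = true ∧ U (n + 1) x = j then (1 : ℝ) else 0) * X (n + 2) := by
      funext x
      by_cases h : ε (n + 2) x = true ∧ U (n + 1) x = j <;> simp [h]
    have hIF : IndepFun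
        (fun x => if ε (n + 2) x = true ∧ U (n + 1) x = j then (1 : ℝ) else 0)
        (X (n + 2)) P := by
      have := hindep''.comp
        (φ := fun q : Bool × ℕ => if q.1 = true ∧ q.2 = j then (1 : ℝ) else 0)
        (ψ := id) (measurable_of_countable _) measurable_id
      exact this
    have := hIF.integral_mul_eq_mul_integral
      (Measurable.aestronglyMeasurable (Measurable.ite
        (((hεmeas (n + 2)) (measurableSet_singleton true)).inter
          ((hUmeas (n + 1)) (measurableSet_singleton j)))
        measurable_const measurable_const))
      (hXmeas (n + 2)).aestronglyMeasurable
    calc (∫ x, (if ε (n + 2) x = true ∧ U (n + 1) x = j then X (n + 2) x else 0) ∂P)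
        = ∫ x, ((fun x => if ε (n + 2) x = true ∧ U (n + 1) x = j then (1 : ℝ) else 0)
            * X (n + 2)) x ∂P := by rw [← heq]
      _ = (∫ x, (if ε (n + 2) x = true ∧ U (n + 1) x = j then (1 : ℝ) else 0) ∂P)
            * ∫ x, X (n + 2) x ∂P := this
      _ = 0 := by rw [hXcent (n + 2)]; ring
  have hIb : (∫ x, (if ε (n + 2) x = false then X (n + 2) x ^ 2 else 0) ∂P)
      = (1 - p) * σ ^ 2 := by
    have heq : (fun x => if ε (n + 2) x = false then X (n + 2) x ^ 2 else 0)
        = (fun x => if ε (n + 2) x = false then (1 : ℝ) else 0)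
          * fun x => X (n + 2) x ^ 2 := by
      funext x; by_cases h : ε (n + 2) x = false <;> simp [h]
    have hIF : IndepFun
        (fun x => if ε (n + 2) x = false then (1 : ℝ) else 0)
        (fun x => X (n + 2) x ^ 2) P := by
      have := hindep''.comp
        (φ := fun q : Bool × ℕ => if q.1 = false then (1 : ℝ) else 0)
        (ψ := fun x : ℝ => x ^ 2) (measurable_of_countable _)
        (measurable_id.pow_const 2)
      exact this
    have hmul := hIF.integral_mul_eq_mul_integral
      (Measurable.aestronglyMeasurable (Measurable.ite
        ((hεmeas (n + 2)) (measurableSet_singleton false))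
        measurable_const measurable_const))
      ((hXmeas (n + 2)).pow_const 2).aestronglyMeasurable
    have hindval : (∫ x, (if ε (n + 2) x = false then (1 : ℝ) else 0) ∂P) = 1 - p := by
      have hmeasset : MeasurableSet {ω | ε (n + 2) ω = false} :=
        (hεmeas (n + 2)) (measurableSet_singleton false)
      have hindic : (fun x => if ε (n + 2) x = false then (1 : ℝ) else 0)
          = Set.indicator {ω | ε (n + 2) ω = false} (fun _ => (1 : ℝ)) := by
        funext x; simp [Set.indicator_apply, Set.mem_setOf_eq]
      rw [hindic, integral_indicator_const (1 : ℝ) hmeasset, measureReal_def,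
        hlaw' (n + 2) (by omega), ENNReal.toReal_ofReal (by linarith [hp.2]), smul_eq_mul,
        mul_one]
    calc (∫ x, (if ε (n + 2) x = false then X (n + 2) x ^ 2 else 0) ∂P)
        = ∫ x, ((fun x => if ε (n + 2) x = false then (1 : ℝ) else 0)
            * fun x => X (n + 2) x ^ 2) x ∂P := by rw [← heq]
      _ = (∫ x, (if ε (n + 2) x = false then (1 : ℝ) else 0) ∂P)
            * ∫ x, X (n + 2) x ^ 2 ∂P := hmul
      _ = (1 - p) * σ ^ 2 := by rw [hindval, hXvar (n + 2)]
  -- pointwise decomposition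
  have hdecomp : (fun ω =>
        (a2 * ∑ j ∈ Finset.Icc 1 (n + 2), hatX j ω
          - a1 * ∑ j ∈ Finset.Icc 1 (n + 1), hatX j ω) * X (n + 2) ω)
      = ((∑ j ∈ Finset.Icc 1 (n + 1),
            fun ω => (a2 * hatX j ω) *
              (if ε (n + 2) ω = true ∧ U (n + 1) ω = j then X (n + 2) ω else 0))
          + fun ω => a2 * (if ε (n + 2) ω = false then X (n + 2) ω ^ 2 else 0))
        + fun ω => ((a2 - a1) * ∑ j ∈ Finset.Icc 1 (n + 1), hatX j ω) * X (n + 2) ω := by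
    funext ω
    simp only [Pi.add_apply, Finset.sum_apply]
    rw [Finset.sum_Icc_succ_top (by omega : 1 ≤ n + 2), hdef' ω]
    by_cases hε : ε (n + 2) ω = true
    · have hsum : (∑ j ∈ Finset.Icc 1 (n + 1), (a2 * hatX j ω) *
          (if ε (n + 2) ω = true ∧ U (n + 1) ω = j then X (n + 2) ω else 0))
          = (a2 * hatX (U (n + 1) ω) ω) * X (n + 2) ω := by
        rw [Finset.sum_eq_single (U (n + 1) ω)]
        · rw [if_pos ⟨hε, rfl⟩]
        · intro b hb hbne
          rw [if_neg (fun hcon => hbne hcon.2.symm), mul_zero]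
        · intro hU; exact absurd (hUrange' ω) hU
      rw [hsum, if_pos hε, if_neg (by simp [hε])]
      ring
    · have hε' : ε (n + 2) ω = false := by simpa using hε
      have hsum : (∑ j ∈ Finset.Icc 1 (n + 1), (a2 * hatX j ω) *
          (if ε (n + 2) ω = true ∧ U (n + 1) ω = j then X (n + 2) ω else 0)) = 0 :=
        Finset.sum_eq_zero fun b _ => by
          rw [if_neg (fun hcon => hε hcon.1), mul_zero]
      rw [hsum, if_neg hε, if_pos hε']
      ring
  rw [hdecomp]
  -- conditional expectation computation
  refine (condExp_add (hf₁int.add hf₂int) hf₃int _).trans ?_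
  have key₃ : P[(fun ω => ((a2 - a1) * ∑ j ∈ Finset.Icc 1 (n + 1), hatX j ω)
      * X (n + 2) ω) | ℱ (n + 1)] =ᵐ[P]
      fun ω => ((a2 - a1) * ∑ j ∈ Finset.Icc 1 (n + 1), hatX j ω) * (0 : ℝ) := by
    refine key _ _ 0 ?_ ⟨fun t => t.2.2, measurable_snd.snd, rfl⟩ hf₃int
      ((hXL2 (n + 2)).integrable one_le_two) (hXcent (n + 2))
    exact ((Finset.stronglyMeasurable_fun_sum _ hmono).const_mul (a2 - a1))
  refine (((condExp_add hf₁int hf₂int _).add key₃)).trans ?_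
  have key₂ : P[(fun ω => a2 * (if ε (n + 2) ω = false then X (n + 2) ω ^ 2 else 0))
      | ℱ (n + 1)] =ᵐ[P] fun _ => a2 * ((1 - p) * σ ^ 2) := by
    exact key (fun _ => a2) _ ((1 - p) * σ ^ 2) stronglyMeasurable_const
      ⟨fun t => if t.1 = false then t.2.2 ^ 2 else 0,
        Measurable.ite (measurable_fst (measurableSet_singleton false))
          (measurable_snd.snd.pow_const 2) measurable_const, rfl⟩
      hf₂int hhbint hIb
  have key₁ : ∀ j ∈ Finset.Icc 1 (n + 1),
      P[(fun ω => (a2 * hatX j ω) *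
        (if ε (n + 2) ω = true ∧ U (n + 1) ω = j then X (n + 2) ω else 0)) | ℱ (n + 1)]
      =ᵐ[P] fun ω => (a2 * hatX j ω) * (0 : ℝ) := by
    intro j hj
    refine key _ _ 0 ((hmono j hj).const_mul a2)
      ⟨fun t => if t.1 = true ∧ t.2.1 = j then t.2.2 else 0,
        Measurable.ite ((measurable_fst (measurableSet_singleton true)).inter
          ((measurable_fst.comp measurable_snd) (measurableSet_singleton j)))
          measurable_snd.snd measurable_const, rfl⟩
      (hint1 j hj) ((hhj2 j).integrable one_le_two) (hIj j)
  refine (((condExp_finset_sum hint1 _).trans (eventuallyEq_sum key₁)).add key₂).add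
    EventuallyEq.rfl |>.trans ?_
  refine Eventually.of_forall fun ω => ?_
  simp only [Pi.add_apply, Finset.sum_apply, mul_zero, Finset.sum_const_zero, zero_add,
    add_zero]
  ring
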